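/- (χ_y-genus of symmetric products of a curve, algebraic form) Let g ≥ 1 and n ≥ 0 be natural numbers. In the polynomial ring ℚ[y], one has the identity (1/n!) · ∑_{σ ∈ Equiv.Perm (Fin n)} ∏_{r ∈ full cycle type of σ} (1 − g)·(1 + (−y)^r) = (coefficient of t^n in the polynomial ((1 − t)·(1 + y·t))^{g−1} ∈ (ℚ[y])[t]). Here the full cycle type of σ is the multiset of lengths of all orbits of σ on Fin n, including a part 1 for each fixed point. (This identity expresses the result ∑_{n≥1} χ_y(SP^n(S_g)) tⁿ = ((1−t)(1+yt))^{g−1}, since the equivariant χ_y-genus of the r-cycle acting on the r-fold power of a genus-g curve equals (1−g)(1+(−y)^r).) -/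

import Mathlib

/-- The full cycle type of a permutation of `Fin n`: the multiset of lengths of all
its orbits, i.e. its cycle type together with a part `1` for each fixed point. -/
def fullCycleType {n : ℕ} (σ : Equiv.Perm (Fin n)) : Multiset ℕ :=
  σ.cycleType + Multiset.replicate (n - σ.cycleType.sum) 1

open Equiv Finset Polynomial

namespace ChiYAux


variable {n : ℕ}

lemma comp_zpow_eq {K : Type*} {σ : Equiv.Perm (Fin n)} {F : Fin n → K}
    (h : ∀ x, F (σ x) = F x) (i : ℤ) (x : Fin n) : F ((σ ^ i) x) = F x := by
  have hinv : ∀ z, F (σ⁻¹ z) = F z := fun z => by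
    conv_rhs => rw [← Equiv.apply_symm_apply σ z, h]
    rfl
  induction i using Int.induction_on with
  | zero => simp
  | succ i ih =>
      have : (σ ^ ((i : ℤ) + 1)) x = σ ((σ ^ (i : ℤ)) x) := by
        rw [add_comm, zpow_add, zpow_one, Equiv.Perm.mul_apply]
      rw [this, h, ih]
  | pred i ih =>
      have : (σ ^ (-(i : ℤ) - 1)) x = σ⁻¹ ((σ ^ (-(i : ℤ))) x) := by
        rw [sub_eq_add_neg, add_comm, zpow_add, zpow_neg_one, Equiv.Perm.mul_apply]
      rw [this, hinv, ih]

lemma invariant_consts {K : Type*} {σ : Equiv.Perm (Fin n)} {F : Fin n → K}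
    (h : F ∘ σ = F) {x y : Fin n} (hxy : σ.SameCycle x y) : F x = F y := by
  obtain ⟨i, hi⟩ := hxy
  rw [← hi]
  exact (comp_zpow_eq (fun z => congrFun h z) i x).symm

/-- L1: the sum over σ-invariant colorings equals the product over the full cycle type. -/
lemma sum_invariant {R : Type*} [CommRing R] {K : Type*} [Fintype K] [DecidableEq K]
    (w : K → R) (σ : Equiv.Perm (Fin n)) :
    ∑ F ∈ univ.filter (fun F : Fin n → K => F ∘ σ = F), ∏ p, w (F p)
      = ((fullCycleType σ).map (fun r => ∑ k, w k ^ r)).prod := by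
  classical
  set s : Setoid (Fin n) := Equiv.Perm.SameCycle.setoid σ with hs
  letI : DecidableRel ((· ≈ ·) : Fin n → Fin n → Prop) :=
    fun x y => (inferInstance : Decidable (σ.SameCycle x y))
  have hQeq : ∀ x y : Fin n, Quotient.mk s x = Quotient.mk s y ↔ σ.SameCycle x y :=
    fun x y => Quotient.eq
  set sz : Quotient s → ℕ := fun O => (univ.filter fun p => Quotient.mk s p = O).card with hsz
  -- Step 1: reindex by functions on the quotient
  have step1 : ∑ F ∈ univ.filter (fun F : Fin n → K => F ∘ σ = F), ∏ p, w (F p)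
      = ∑ G : Quotient s → K, ∏ p, w (G (Quotient.mk s p)) := by
    apply Finset.sum_nbij' (fun F => fun O => F O.out)
      (fun G => fun p => G (Quotient.mk s p))
    · intro F hF
      exact mem_univ _
    · intro G hG
      simp only [mem_filter, mem_univ, true_and]
      funext p
      simp only [Function.comp_apply]
      congr 1
      rw [hQeq]
      exact Equiv.Perm.sameCycle_apply_left.mpr (Equiv.Perm.SameCycle.refl _ _)
    · intro F hF
      simp only [mem_filter, mem_univ, true_and] at hF
      funext p
      exact invariant_consts hF (Quotient.mk_out p)
    · intro G hG
      funext O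
      show G (Quotient.mk s O.out) = G O
      rw [Quotient.out_eq]
    · intro F hF
      simp only [mem_filter, mem_univ, true_and] at hF
      apply Finset.prod_congr rfl
      intro p _
      congr 1
      exact (invariant_consts hF (Quotient.mk_out p)).symm
  -- Step 2: fiberwise product
  have step2 : ∀ G : Quotient s → K,
      ∏ p, w (G (Quotient.mk s p)) = ∏ O : Quotient s, w (G O) ^ (sz O) := by
    intro G
    rw [← Finset.prod_fiberwise univ (fun p => Quotient.mk s p) (fun p => w (G (Quotient.mk s p)))]
    apply Finset.prod_congr rfl
    intro O _
    rw [← Finset.prod_const]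
    · apply Finset.prod_congr rfl
      intro p hp
      simp only [mem_filter] at hp
      rw [hp.2]
  have step3 : ∑ G : Quotient s → K, ∏ O : Quotient s, w (G O) ^ (sz O)
      = ∏ O : Quotient s, ∑ k, w k ^ (sz O) := by
    rw [← Finset.sum_prod_piFinset univ (fun O k => w k ^ sz O)]
    rw [Fintype.piFinset_univ]
  -- Step 4: the orbit product is the full cycle type product
  have step4 : ∏ O : Quotient s, (fun r => ∑ k, w k ^ r) (sz O)
      = ((fullCycleType σ).map (fun r => ∑ k, w k ^ r)).prod := by
    set A : ℕ → R := fun r => ∑ k, w k ^ r with hA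
    -- split by whether the class is a fixed point class
    rw [← Finset.prod_filter_mul_prod_filter_not univ (fun O : Quotient s => σ O.out = O.out)]
    have hfix : ∀ x : Fin n, σ x = x →
        (univ.filter fun p => Quotient.mk s p = Quotient.mk s x) = {x} := by
      intro x hx
      ext p
      simp only [mem_filter, mem_univ, true_and, mem_singleton, hQeq]
      constructor
      · intro h; exact h.eq_of_right hx
      · rintro rfl; exact Equiv.Perm.SameCycle.refl _ _
    have hmov : ∀ x : Fin n, σ x ≠ x →
        (univ.filter fun p => Quotient.mk s p = Quotient.mk s x) = (σ.cycleOf x).support := by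
      intro x hx
      ext p
      simp only [mem_filter, mem_univ, true_and, hQeq,
        Equiv.Perm.mem_support_cycleOf_iff' hx]
      exact ⟨fun h => h.symm, fun h => h.symm⟩
    have houtmk : ∀ O : Quotient s, Quotient.mk s O.out = O := fun O => Quotient.out_eq O
    -- fixed part
    have hfixprod : ∏ O ∈ univ.filter (fun O : Quotient s => σ O.out = O.out), A (sz O)
        = A 1 ^ (n - σ.cycleType.sum) := by
      have hone : ∀ O ∈ univ.filter (fun O : Quotient s => σ O.out = O.out), A (sz O) = A 1 := by
        intro O hO
        simp only [mem_filter, mem_univ, true_and] at hO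
        congr 1
        have h2 := hfix O.out hO
        rw [houtmk O] at h2
        rw [hsz]
        simp only [h2]
        simp
      rw [Finset.prod_congr rfl hone, Finset.prod_const]
      congr 1
      -- card of fixed classes = number of fixed points
      have : (univ.filter (fun O : Quotient s => σ O.out = O.out)).card
          = (univ.filter (fun x : Fin n => σ x = x)).card := by
        apply Finset.card_bij (fun O _ => O.out)
        · intro O hO
          simp only [mem_filter, mem_univ, true_and] at hO ⊢
          exact hO
        · intro O₁ h₁ O₂ h₂ h
          exact Quotient.out_injective h
        · intro x hx
          simp only [mem_filter, mem_univ, true_and] at hx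
          have hout : (Quotient.mk s x).out = x := by
            have := Quotient.mk_out (s := s) x
            exact Equiv.Perm.SameCycle.eq_of_right this hx
          refine ⟨Quotient.mk s x, ?_, hout⟩
          simp only [mem_filter, mem_univ, true_and, hout, hx]
      rw [this]
      have : (univ.filter (fun x : Fin n => σ x = x)) = (σ.support)ᶜ := by
        ext x; simp [Equiv.Perm.mem_support]
      rw [this, Finset.card_compl, Equiv.Perm.sum_cycleType]
      simp
    -- moving part
    have hmovprod : ∏ O ∈ univ.filter (fun O : Quotient s => ¬ σ O.out = O.out), A (sz O)
        = (σ.cycleType.map A).prod := by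
      rw [Equiv.Perm.cycleType_def, Multiset.map_map]
      have : (σ.cycleFactorsFinset.val.map (A ∘ (Finset.card ∘ Equiv.Perm.support))).prod
          = ∏ c ∈ σ.cycleFactorsFinset, A c.support.card := rfl
      rw [this]
      apply Finset.prod_bij (fun O _ => σ.cycleOf O.out)
      · intro O hO
        simp only [mem_filter, mem_univ, true_and] at hO
        exact Equiv.Perm.cycleOf_mem_cycleFactorsFinset_iff.mpr (Equiv.Perm.mem_support.mpr hO)
      · intro O₁ h₁ O₂ h₂ h
        simp only [mem_filter, mem_univ, true_and] at h₁ h₂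
        have : O₂.out ∈ (σ.cycleOf O₁.out).support := by
          rw [h]
          rw [Equiv.Perm.mem_support_cycleOf_iff' h₂]
        rw [Equiv.Perm.mem_support_cycleOf_iff' h₁] at this
        calc O₁ = Quotient.mk s O₁.out := (houtmk O₁).symm
          _ = Quotient.mk s O₂.out := (hQeq _ _).mpr this
          _ = O₂ := houtmk O₂
      · intro c hc
        obtain ⟨hcyc, hsupp⟩ := Equiv.Perm.mem_cycleFactorsFinset_iff.mp hc
        obtain ⟨x, hx, -⟩ := hcyc
        have hxc : x ∈ c.support := Equiv.Perm.mem_support.mpr hx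
        have hσx : σ x ≠ x := by rw [← hsupp x hxc]; exact hx
        have hcx : c = σ.cycleOf x := Equiv.Perm.cycle_is_cycleOf hxc hc
        have hsc : σ.SameCycle (Quotient.mk s x).out x := Quotient.mk_out (s := s) x
        refine ⟨Quotient.mk s x, ?_, ?_⟩
        · simp only [mem_filter, mem_univ, true_and]
          intro hfix
          exact hσx ((hsc.apply_eq_self_iff).mp hfix)
        · rw [hcx, hsc.cycleOf_eq]
      · intro O hO
        simp only [mem_filter, mem_univ, true_and] at hO
        congr 1
        have h2 := hmov O.out hO
        rw [houtmk O] at h2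
        rw [hsz]
        simp only [h2]
    rw [hfixprod, hmovprod, fullCycleType, Multiset.map_add, Multiset.prod_add,
      Multiset.map_replicate, Multiset.prod_replicate, mul_comm]
  rw [step1]
  calc ∑ G : Quotient s → K, ∏ p, w (G (Quotient.mk s p))
      = ∑ G : Quotient s → K, ∏ O : Quotient s, w (G O) ^ (sz O) := by
        exact Finset.sum_congr rfl fun G _ => step2 G
    _ = ∏ O : Quotient s, ∑ k, w k ^ (sz O) := step3
    _ = ((fullCycleType σ).map (fun r => ∑ k, w k ^ r)).prod := step4



/-- L2: the signed count of permutations fixing a coloring. -/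
lemma sum_sign {R : Type*} [CommRing R] {K : Type*} [DecidableEq K] (F : Fin n → K) :
    ∑ σ ∈ univ.filter (fun σ : Equiv.Perm (Fin n) => F ∘ σ = F),
      ((Equiv.Perm.sign σ : ℤ) : R) = if Function.Injective F then 1 else 0 := by
  classical
  by_cases hF : Function.Injective F
  · rw [if_pos hF]
    have h1 : univ.filter (fun σ : Equiv.Perm (Fin n) => F ∘ σ = F) = {1} := by
      ext σ
      simp only [mem_filter, mem_univ, true_and, mem_singleton]
      constructor
      · intro h
        exact Equiv.Perm.ext fun x => (hF (congrFun h x)).trans (Equiv.Perm.one_apply x).symm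
      · rintro rfl
        rfl
    rw [h1, sum_singleton]
    simp
  · rw [if_neg hF]
    obtain ⟨p, q, hpq, hne⟩ := Function.not_injective_iff.mp hF
    have hswapF : ∀ x, F (Equiv.swap p q x) = F x := by
      intro x
      rcases eq_or_ne x p with rfl | hxp
      · rw [Equiv.swap_apply_left, ← hpq]
      rcases eq_or_ne x q with rfl | hxq
      · rw [Equiv.swap_apply_right, hpq]
      · rw [Equiv.swap_apply_of_ne_of_ne hxp hxq]
    apply Finset.sum_involution (fun σ _ => σ * Equiv.swap p q)
    · intro σ hσ
      have : Equiv.Perm.sign (σ * Equiv.swap p q) = -Equiv.Perm.sign σ := by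
        rw [Equiv.Perm.sign_mul, Equiv.Perm.sign_swap hne, mul_neg_one]
      rw [this]
      push_cast
      ring
    · intro σ hσ h
      intro heq
      have h2 : σ * Equiv.swap p q = σ * 1 := by rwa [mul_one]
      have h3 : Equiv.swap p q = 1 := mul_left_cancel h2
      exact hne (by rw [← Equiv.swap_apply_left p q, h3]; rfl)
    · intro σ hσ
      simp only [mem_filter, mem_univ, true_and] at hσ ⊢
      have h2 : ∀ z, F (σ z) = F z := fun z => congrFun hσ z
      funext x
      simp only [Function.comp_apply, Equiv.Perm.mul_apply]
      rw [h2, hswapF]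
    · intro σ hσ
      rw [mul_assoc, Equiv.swap_mul_self, mul_one]

/-- L3: sum over injective colorings = n! times sum over subsets of size n. -/
lemma sum_injective {R : Type*} [CommRing R] {K : Type*} [Fintype K] [DecidableEq K]
    (w : K → R) :
    ∑ F ∈ univ.filter (fun F : Fin n → K => Function.Injective F), ∏ p, w (F p)
      = (n.factorial : R) * ∑ t ∈ Finset.powersetCard n (univ : Finset K), ∏ k ∈ t, w k := by
  classical
  have himg : ∀ F ∈ univ.filter (fun F : Fin n → K => Function.Injective F),
      Finset.image F univ ∈ Finset.powersetCard n (univ : Finset K) := by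
    intro F hF
    simp only [mem_filter, mem_univ, true_and] at hF
    rw [Finset.mem_powersetCard]
    exact ⟨Finset.subset_univ _, by rw [Finset.card_image_of_injective _ hF]; simp⟩
  rw [← Finset.sum_fiberwise_of_maps_to himg (fun F => ∏ p, w (F p))]
  rw [Finset.mul_sum]
  apply Finset.sum_congr rfl
  intro t ht
  rw [Finset.mem_powersetCard] at ht
  have hprod : ∀ F ∈ (univ.filter (fun F : Fin n → K => Function.Injective F)).filter
      (fun F => Finset.image F univ = t), ∏ p, w (F p) = ∏ k ∈ t, w k := by
    intro F hF
    simp only [mem_filter, mem_univ, true_and] at hF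
    rw [← hF.2, Finset.prod_image (fun x _ y _ h => hF.1 h)]
  rw [Finset.sum_congr rfl hprod, Finset.sum_const, nsmul_eq_mul]
  congr 1
  -- count: number of injective F with image t is n!
  have hmemt : ∀ {F : Fin n → K}, Finset.image F univ = t → ∀ p, F p ∈ t := by
    intro F hFt p
    rw [← hFt]
    exact Finset.mem_image_of_mem F (mem_univ p)
  have hcard : ((univ.filter (fun F : Fin n → K => Function.Injective F)).filter
      (fun F => Finset.image F univ = t)).card = (univ : Finset (Fin n ↪ ↥t)).card := by
    apply Finset.card_bij (fun F hF =>
      (⟨fun p => ⟨F p, hmemt (by simp only [mem_filter] at hF; exact hF.2) p⟩,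
        fun a b hab => (by simp only [mem_filter, mem_univ, true_and] at hF
                           exact hF.1 (congrArg Subtype.val hab))⟩ : Fin n ↪ ↥t))
    · intro F hF
      exact mem_univ _
    · intro F₁ h₁ F₂ h₂ h
      funext p
      have := congrFun (congrArg (fun (e : Fin n ↪ ↥t) => (e : Fin n → ↥t)) h) p
      exact congrArg Subtype.val this
    · intro e he
      have hinj : Function.Injective (fun p => (e p : K)) :=
        fun a b hab => e.injective (Subtype.ext hab)
      refine ⟨fun p => (e p : K), ?_, rfl⟩
      simp only [mem_filter, mem_univ, true_and]
      refine ⟨hinj, ?_⟩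
      apply Finset.eq_of_subset_of_card_le
      · intro k hk
        simp only [Finset.mem_image] at hk
        obtain ⟨p, -, rfl⟩ := hk
        exact (e p).2
      · rw [Finset.card_image_of_injective _ hinj]
        simp [ht.2]
  rw [hcard, Finset.card_univ, Fintype.card_embedding_eq, Fintype.card_coe, ht.2,
    Fintype.card_fin, Nat.descFactorial_self]


lemma neg_one_pow_key {R : Type*} [CommRing R] (c d s : ℕ) :
    ((-1 : R)) ^ (c + d) = (-1) ^ (d + s) * (-1) ^ (s + c) := by
  rw [pow_add, pow_add, pow_add]
  have h2 : (-1 : R) ^ s * (-1) ^ s = 1 := by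
    rw [← pow_add]; exact Even.neg_one_pow (Even.add_self s)
  calc (-1 : R) ^ c * (-1) ^ d
      = ((-1 : R) ^ s * (-1) ^ s) * ((-1) ^ c * (-1) ^ d) := by rw [h2, one_mul]
    _ = ((-1) ^ d * (-1) ^ s) * ((-1) ^ s * (-1) ^ c) := by ring

end ChiYAux

/-- The `χ_y`-genus of symmetric products of a genus-`g` curve, algebraic form: in
`ℚ[y]`, the cycle-index average `(1/n!) ∑_{σ ∈ Sₙ} ∏_{r ∈ full cycle type of σ}
(1 − g)(1 + (−y)^r)` equals the coefficient of `tⁿ` in `((1 − t)(1 + y·t))^{g−1}`,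
computed in `(ℚ[y])[t]`. -/
theorem chi_y_genus_symmetricProduct (g n : ℕ) (hg : 1 ≤ g) :
    (↑n.factorial : ℚ)⁻¹ •
        ∑ σ : Equiv.Perm (Fin n),
          ((fullCycleType σ).map fun r =>
            ((1 : Polynomial ℚ) - (g : Polynomial ℚ)) *
              (1 + (-(Polynomial.X : Polynomial ℚ)) ^ r)).prod =
      Polynomial.coeff
        ((((1 : Polynomial (Polynomial ℚ)) - Polynomial.X) *
            (1 + Polynomial.C (Polynomial.X : Polynomial ℚ) * Polynomial.X)) ^ (g - 1)) n := by
  classical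
  obtain ⟨m, rfl⟩ : ∃ m, g = m + 1 := ⟨g - 1, (Nat.succ_pred_eq_of_pos hg).symm⟩
  simp only [Nat.add_sub_cancel]
  set R := Polynomial ℚ
  set K := Bool × Fin m with hK
  set w : K → R := fun k => if k.1 then -Polynomial.X else 1 with hw
  set B : ℕ → R := fun r => ∑ k : K, w k ^ r with hB
  -- the basic factor identity
  have hA : ∀ r : ℕ, ((1 : R) - ((m + 1 : ℕ) : R)) * (1 + (-(Polynomial.X : R)) ^ r)
      = - B r := by
    intro r
    have hsum : ∑ k : K, w k ^ r = (m : R) * (-Polynomial.X) ^ r + (m : R) := by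
      rw [Fintype.sum_prod_type, Fintype.sum_bool]
      simp [hw, Finset.sum_const, mul_comm]
    rw [hB]
    simp only
    rw [hsum]
    push_cast
    erw [Nat.cast_succ]
    ring
  -- per-permutation identity
  have hper : ∀ σ : Equiv.Perm (Fin n),
      ((fullCycleType σ).map fun r =>
          ((1 : R) - ((m + 1 : ℕ) : R)) * (1 + (-(Polynomial.X : R)) ^ r)).prod
        = (-1 : R) ^ n * ((Equiv.Perm.sign σ : ℤ) : R) *
            ∑ F ∈ univ.filter (fun F : Fin n → K => F ∘ σ = F), ∏ p, w (F p) := by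
    intro σ
    have h1 : ((fullCycleType σ).map fun r =>
        ((1 : R) - ((m + 1 : ℕ) : R)) * (1 + (-(Polynomial.X : R)) ^ r))
          = ((fullCycleType σ).map B).map Neg.neg := by
      rw [Multiset.map_map]
      exact Multiset.map_congr rfl fun r _ => hA r
    rw [h1, Multiset.prod_map_neg, Multiset.card_map]
    -- sign part
    have hle : σ.cycleType.sum ≤ n := by
      rw [Equiv.Perm.sum_cycleType]
      exact (Finset.card_le_univ _).trans_eq (by simp)
    obtain ⟨d, hd⟩ : ∃ d, n = d + σ.cycleType.sum := ⟨n - σ.cycleType.sum, (Nat.sub_add_cancel hle).symm⟩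
    have hsub : n - σ.cycleType.sum = d := by omega
    have hcard : Multiset.card (fullCycleType σ) = Multiset.card σ.cycleType + d := by
      rw [fullCycleType, Multiset.card_add, Multiset.card_replicate, hsub]
    have hsign : ((Equiv.Perm.sign σ : ℤ) : R) = (-1 : R) ^ (σ.cycleType.sum + Multiset.card σ.cycleType) := by
      rw [Equiv.Perm.sign_of_cycleType]
      push_cast
      rw [Int.cast_pow, Int.cast_neg, Int.cast_one]
    have hn : ((-1 : R)) ^ n = (-1) ^ (d + σ.cycleType.sum) :=
      congrArg (fun e => (-1 : R) ^ e) hd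
    rw [hcard, hsign, hn]
    rw [ChiYAux.neg_one_pow_key (Multiset.card σ.cycleType) d σ.cycleType.sum]
    rw [ChiYAux.sum_invariant w σ]
  rw [Finset.sum_congr rfl fun σ _ => hper σ]
  -- pull out the constant and swap the two sums
  have swap1 : ∑ σ : Equiv.Perm (Fin n), (-1 : R) ^ n * ((Equiv.Perm.sign σ : ℤ) : R) *
        ∑ F ∈ univ.filter (fun F : Fin n → K => F ∘ σ = F), ∏ p, w (F p)
      = (-1 : R) ^ n * ∑ F : Fin n → K, (∏ p, w (F p)) *
          ∑ σ ∈ univ.filter (fun σ : Equiv.Perm (Fin n) => F ∘ σ = F), ((Equiv.Perm.sign σ : ℤ) : R) := by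
    rw [Finset.mul_sum]
    simp only [Finset.mul_sum, Finset.sum_filter]
    rw [Finset.sum_comm]
    apply Finset.sum_congr rfl
    intro F _
    apply Finset.sum_congr rfl
    intro σ _
    by_cases h : F ∘ σ = F <;> simp [h] <;> ring
  rw [swap1]
  have hsignsum : ∑ F : Fin n → K, (∏ p, w (F p)) *
        ∑ σ ∈ univ.filter (fun σ : Equiv.Perm (Fin n) => F ∘ σ = F), ((Equiv.Perm.sign σ : ℤ) : R)
      = ∑ F ∈ univ.filter (fun F : Fin n → K => Function.Injective F), ∏ p, w (F p) := by
    rw [Finset.sum_filter]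
    apply Finset.sum_congr rfl
    intro F _
    rw [ChiYAux.sum_sign F]
    by_cases h : Function.Injective F <;> simp [h]
  rw [hsignsum, ChiYAux.sum_injective w]
  -- identify the right-hand side coefficient
  have hfac : (((1 : Polynomial R) - Polynomial.X) *
        (1 + Polynomial.C (Polynomial.X : R) * Polynomial.X)) ^ m
      = ∏ k : K, (1 + Polynomial.C (-(w k)) * Polynomial.X) := by
    have h1 : ∀ j : Fin m, (1 : Polynomial R) + Polynomial.C (-(w (true, j))) * Polynomial.X
        = 1 + Polynomial.C (Polynomial.X : R) * Polynomial.X := by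
      intro j; simp [hw]
    have h0 : ∀ j : Fin m, (1 : Polynomial R) + Polynomial.C (-(w (false, j))) * Polynomial.X
        = 1 - Polynomial.X := by
      intro j
      rw [show (-(w (false, j))) = (-1 : R) from by simp [hw], map_neg, map_one]
      ring
    rw [Fintype.prod_prod_type, Fintype.prod_bool,
      Finset.prod_congr rfl (fun j _ => h1 j), Finset.prod_congr rfl (fun j _ => h0 j),
      Finset.prod_const, Finset.prod_const, Finset.card_univ, Fintype.card_fin, ← mul_pow,
      mul_comm]
  have hcoeff : (∏ k : K, (1 + Polynomial.C (-(w k)) * Polynomial.X)).coeff n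
      = ∑ t ∈ Finset.powersetCard n (univ : Finset K), ∏ k ∈ t, (-(w k)) := by
    have hcomm : ∀ k : K, (1 : Polynomial R) + Polynomial.C (-(w k)) * Polynomial.X
        = Polynomial.C (-(w k)) * Polynomial.X + 1 := fun k => add_comm _ _
    rw [Finset.prod_congr rfl fun k _ => hcomm k]
    rw [Finset.prod_add]
    simp only [Finset.prod_const_one, mul_one, Finset.prod_mul_distrib, Finset.prod_const,
      ← map_prod]
    rw [Polynomial.finset_sum_coeff]
    simp only [Polynomial.coeff_C_mul, Polynomial.coeff_X_pow]
    rw [Finset.powersetCard_eq_filter, Finset.sum_filter]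
    apply Finset.sum_congr rfl
    intro t _
    by_cases h : t.card = n
    · simp [h]
    · simp [h, Ne.symm h]
  rw [hfac, hcoeff]
  -- match subset sums
  have hneg : ∑ t ∈ Finset.powersetCard n (univ : Finset K), ∏ k ∈ t, (-(w k))
      = (-1 : R) ^ n * ∑ t ∈ Finset.powersetCard n (univ : Finset K), ∏ k ∈ t, w k := by
    rw [Finset.mul_sum]
    apply Finset.sum_congr rfl
    intro t ht
    rw [Finset.mem_powersetCard] at ht
    calc ∏ k ∈ t, -(w k) = ∏ k ∈ t, ((-1 : R) * w k) := Finset.prod_congr rfl fun k _ => (neg_one_mul _).symm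
      _ = ((-1 : R) ^ t.card) * ∏ k ∈ t, w k := by
          rw [Finset.prod_mul_distrib, Finset.prod_const]
      _ = _ := by rw [ht.2]
  rw [hneg]
  -- clear factorial
  rw [show ((-1 : R) ^ n * ((n.factorial : R) *
        ∑ t ∈ Finset.powersetCard n (univ : Finset K), ∏ k ∈ t, w k))
      = (n.factorial : R) * ((-1 : R) ^ n *
        ∑ t ∈ Finset.powersetCard n (univ : Finset K), ∏ k ∈ t, w k) from by ring]
  rw [← Polynomial.C_eq_natCast, ← Polynomial.smul_eq_C_mul, smul_smul,
    inv_mul_cancel₀ (by exact_mod_cast n.factorial_ne_zero), one_smul]
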